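/- Gallager's channel function E_0(ρ, W, Q) := −log Σ_y (Σ_x Q(x) W(y|x)^{1/(1+ρ)})^{1+ρ} is a concave function of ρ on [0,∞) for any fixed input distribution Q and channel W. -/

import Mathlib

open Real Finset

lemma holder2 {ι : Type*} (s : Finset ι) (a b : ι → ℝ) (ha : ∀ i ∈ s, 0 ≤ a i)
    (hb : ∀ i ∈ s, 0 ≤ b i) {μ : ℝ} (hμ0 : 0 ≤ μ) (hμ1 : μ ≤ 1) :
    ∑ i ∈ s, a i ^ μ * b i ^ (1 - μ) ≤ (∑ i ∈ s, a i) ^ μ * (∑ i ∈ s, b i) ^ (1 - μ) := by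
  rcases eq_or_lt_of_le hμ0 with h0 | h0
  · simp [← h0]
  rcases eq_or_lt_of_le hμ1 with h1 | h1
  · simp [h1]
  have hA : 0 ≤ ∑ i ∈ s, a i := Finset.sum_nonneg ha
  have hB : 0 ≤ ∑ i ∈ s, b i := Finset.sum_nonneg hb
  rcases eq_or_lt_of_le hA with hA0 | hA0
  · have : ∀ i ∈ s, a i = 0 := by
      intro i hi
      exact (Finset.sum_eq_zero_iff_of_nonneg ha).1 hA0.symm i hi
    have : ∑ i ∈ s, a i ^ μ * b i ^ (1 - μ) = 0 := by
      apply Finset.sum_eq_zero; intro i hi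
      rw [this i hi, Real.zero_rpow h0.ne', zero_mul]
    rw [this, ← hA0, Real.zero_rpow h0.ne', zero_mul]
  rcases eq_or_lt_of_le hB with hB0 | hB0
  · have : ∀ i ∈ s, b i = 0 := by
      intro i hi
      exact (Finset.sum_eq_zero_iff_of_nonneg hb).1 hB0.symm i hi
    have hz : ∑ i ∈ s, a i ^ μ * b i ^ (1 - μ) = 0 := by
      apply Finset.sum_eq_zero; intro i hi
      rw [this i hi, Real.zero_rpow (by linarith), mul_zero]
    rw [hz, ← hB0, Real.zero_rpow (by linarith), mul_zero]
  set A := ∑ i ∈ s, a i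
  set B := ∑ i ∈ s, b i
  have hApow : (0:ℝ) < A ^ μ := Real.rpow_pos_of_pos hA0 _
  have hBpow : (0:ℝ) < B ^ (1-μ) := Real.rpow_pos_of_pos hB0 _
  have key : ∀ i ∈ s, a i ^ μ * b i ^ (1 - μ)
      ≤ (μ * (a i / A) + (1 - μ) * (b i / B)) * (A ^ μ * B ^ (1 - μ)) := by
    intro i hi
    have h : (a i / A) ^ μ * (b i / B) ^ (1 - μ)
        ≤ μ * (a i / A) + (1 - μ) * (b i / B) :=
      Real.geom_mean_le_arith_mean2_weighted hμ0 (by linarith)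
        (div_nonneg (ha i hi) hA) (div_nonneg (hb i hi) hB) (by ring)
    calc a i ^ μ * b i ^ (1 - μ)
        = ((a i / A) ^ μ * (b i / B) ^ (1 - μ)) * (A ^ μ * B ^ (1 - μ)) := by
          rw [Real.div_rpow (ha i hi) hA, Real.div_rpow (hb i hi) hB]
          field_simp
      _ ≤ (μ * (a i / A) + (1 - μ) * (b i / B)) * (A ^ μ * B ^ (1 - μ)) := by
          apply mul_le_mul_of_nonneg_right h (by positivity)
  calc ∑ i ∈ s, a i ^ μ * b i ^ (1 - μ)
      ≤ ∑ i ∈ s, (μ * (a i / A) + (1 - μ) * (b i / B)) * (A ^ μ * B ^ (1 - μ)) :=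
        Finset.sum_le_sum key
    _ = (μ * (A / A) + (1 - μ) * (B / B)) * (A ^ μ * B ^ (1 - μ)) := by
        rw [← Finset.sum_mul]
        congr 1
        rw [Finset.sum_add_distrib, ← Finset.mul_sum, ← Finset.mul_sum,
          ← Finset.sum_div, ← Finset.sum_div]
    _ = A ^ μ * B ^ (1 - μ) := by
        rw [div_self hA0.ne', div_self hB0.ne']; ring

/-- Gallager's channel function `E_0(ρ, W, Q)` is concave in `ρ` on `[0,∞)`. -/
theorem gallager_E0_concave
    {X Y : Type*} [Fintype X] [Fintype Y] [Nonempty X] [Nonempty Y]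
    (W : X → Y → ℝ) (hWpos : ∀ x y, 0 < W x y) (hW : ∀ x, ∑ y, W x y = 1)
    (Q : X → ℝ) (hQ : ∀ x, 0 ≤ Q x) (hQsum : ∑ x, Q x = 1) :
    ConcaveOn ℝ (Set.Ici (0:ℝ))
      (fun ρ => -Real.log (∑ y, (∑ x, Q x * W x y ^ (1 / (1 + ρ))) ^ (1 + ρ))) := by
  -- some input has positive probability
  obtain ⟨x₀, hx₀⟩ : ∃ x, 0 < Q x := by
    by_contra h
    push_neg at h
    have : ∑ x, Q x = 0 := Finset.sum_eq_zero fun x _ => le_antisymm (h x) (hQ x)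
    rw [hQsum] at this
    exact one_ne_zero this
  set S : ℝ → Y → ℝ := fun ρ y => ∑ x, Q x * W x y ^ (1 / (1 + ρ)) with hS
  set F : ℝ → ℝ := fun ρ => ∑ y, S ρ y ^ (1 + ρ) with hF
  have hSpos : ∀ ρ y, 0 < S ρ y := by
    intro ρ y
    apply Finset.sum_pos'
    · intro x _
      exact mul_nonneg (hQ x) (Real.rpow_pos_of_pos (hWpos x y) _).le
    · exact ⟨x₀, Finset.mem_univ _,
        mul_pos hx₀ (Real.rpow_pos_of_pos (hWpos x₀ y) _)⟩
  have hFpos : ∀ ρ, 0 < F ρ := by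
    intro ρ
    apply Finset.sum_pos (fun y _ => Real.rpow_pos_of_pos (hSpos ρ y) _) Finset.univ_nonempty
  constructor
  · exact convex_Ici 0
  intro p hp q hq lam mu hlam hmu hlm
  simp only [smul_eq_mul, Set.mem_Ici] at hp hq ⊢
  have hmu' : mu = 1 - lam := by linarith
  set r : ℝ := lam * p + mu * q with hr
  set t1 : ℝ := 1 + p with ht1
  set t2 : ℝ := 1 + q with ht2
  set t : ℝ := 1 + r with ht
  have ht1pos : 0 < t1 := by simp [ht1]; linarith
  have ht2pos : 0 < t2 := by simp [ht2]; linarith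
  have htcomb : t = lam * t1 + mu * t2 := by simp [ht, ht1, ht2, hr]; ring_nf; linarith
  have htpos : 0 < t := by
    rw [htcomb]
    nlinarith [mul_nonneg hlam ht1pos.le, mul_nonneg hmu ht2pos.le]
  set μ : ℝ := lam * t1 / t with hμ
  have hμ0 : 0 ≤ μ := div_nonneg (mul_nonneg hlam ht1pos.le) htpos.le
  have hμ1 : μ ≤ 1 := by
    rw [hμ, div_le_one htpos]
    nlinarith [mul_nonneg hmu ht2pos.le]
  have h1μ : (1 - μ) * t = mu * t2 := by
    have : μ * t = lam * t1 := by
      rw [hμ]; field_simp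
    nlinarith [htcomb]
  have hinv : 1 / t = μ * (1 / t1) + (1 - μ) * (1 / t2) := by
    have e1 : μ * (1 / t1) = lam / t := by
      rw [hμ]; field_simp [ht1pos.ne', htpos.ne']
    have e2 : (1 - μ) * (1 / t2) = mu / t := by
      have h2 : 1 - μ = mu * t2 / t := by
        rw [eq_div_iff htpos.ne']; linarith [h1μ]
      rw [h2]; field_simp [ht2pos.ne', htpos.ne']
    rw [e1, e2, ← add_div, hlm]
  -- step 1: pointwise Hölder on the inner sum
  have key1 : ∀ y, S r y ≤ S p y ^ μ * S q y ^ (1 - μ) := by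
    intro y
    have heq : S r y = ∑ x, (Q x * W x y ^ (1 / t1)) ^ μ * (Q x * W x y ^ (1 / t2)) ^ (1 - μ) := by
      apply Finset.sum_congr rfl
      intro x _
      rw [Real.mul_rpow (hQ x) (Real.rpow_pos_of_pos (hWpos x y) _).le,
        Real.mul_rpow (hQ x) (Real.rpow_pos_of_pos (hWpos x y) _).le,
        ← Real.rpow_mul (hWpos x y).le, ← Real.rpow_mul (hWpos x y).le]
      have hQx : Q x ^ μ * Q x ^ (1 - μ) = Q x := by
        rw [← Real.rpow_add' (hQ x) (by norm_num)]
        norm_num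
      calc Q x * W x y ^ (1 / t)
          = Q x ^ μ * Q x ^ (1 - μ) * W x y ^ (1 / t1 * μ + 1 / t2 * (1 - μ)) := by
            rw [hQx]
            congr 1
            rw [hinv]; ring_nf
        _ = Q x ^ μ * Q x ^ (1 - μ) * (W x y ^ (1 / t1 * μ) * W x y ^ (1 / t2 * (1 - μ))) := by
            rw [Real.rpow_add (hWpos x y)]
        _ = Q x ^ μ * W x y ^ (1 / t1 * μ) * (Q x ^ (1 - μ) * W x y ^ (1 / t2 * (1 - μ))) := by
            ring
    rw [heq]
    exact holder2 _ _ _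
      (fun x _ => mul_nonneg (hQ x) (Real.rpow_pos_of_pos (hWpos x y) _).le)
      (fun x _ => mul_nonneg (hQ x) (Real.rpow_pos_of_pos (hWpos x y) _).le) hμ0 hμ1
  -- step 2: raise to power t
  have key2 : ∀ y, S r y ^ t ≤ (S p y ^ t1) ^ lam * (S q y ^ t2) ^ mu := by
    intro y
    calc S r y ^ t ≤ (S p y ^ μ * S q y ^ (1 - μ)) ^ t :=
          Real.rpow_le_rpow (hSpos r y).le (key1 y) htpos.le
      _ = (S p y ^ t1) ^ lam * (S q y ^ t2) ^ mu := by
          rw [Real.mul_rpow (Real.rpow_pos_of_pos (hSpos p y) _).le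
              (Real.rpow_pos_of_pos (hSpos q y) _).le,
            ← Real.rpow_mul (hSpos p y).le, ← Real.rpow_mul (hSpos q y).le,
            ← Real.rpow_mul (hSpos p y).le, ← Real.rpow_mul (hSpos q y).le]
          congr 2
          · rw [hμ]; field_simp
          · rw [h1μ]; ring
  -- step 3: outer Hölder
  have key3 : F r ≤ F p ^ lam * F q ^ mu := by
    calc F r ≤ ∑ y, (S p y ^ t1) ^ lam * (S q y ^ t2) ^ mu :=
          Finset.sum_le_sum fun y _ => key2 y
      _ ≤ (∑ y, S p y ^ t1) ^ lam * (∑ y, S q y ^ t2) ^ (1 - lam) := by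
          rw [hmu']
          exact holder2 _ _ _
            (fun y _ => (Real.rpow_pos_of_pos (hSpos p y) _).le)
            (fun y _ => (Real.rpow_pos_of_pos (hSpos q y) _).le) hlam (by linarith)
      _ = F p ^ lam * F q ^ mu := by rw [hmu']
  -- conclude
  have hlog : Real.log (F r) ≤ lam * Real.log (F p) + mu * Real.log (F q) := by
    calc Real.log (F r) ≤ Real.log (F p ^ lam * F q ^ mu) :=
          Real.log_le_log (hFpos r) key3
      _ = lam * Real.log (F p) + mu * Real.log (F q) := by
          rw [Real.log_mul (Real.rpow_pos_of_pos (hFpos p) _).ne'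
              (Real.rpow_pos_of_pos (hFpos q) _).ne',
            Real.log_rpow (hFpos p), Real.log_rpow (hFpos q)]
  show lam * -Real.log (F p) + mu * -Real.log (F q) ≤ -Real.log (F r)
  linarith
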